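/- Let C be a commutative ring, P a prime ideal of C with residue field k(P), and σ_P : C[y_1,...,y_l] → k(P)[y_1,...,y_l] the induced specialization map. Let < be a monomial order on C[y] (viewing coefficients in C) and let G be a finite subset of C[y] generating an ideal I, such that G is a Gröbner basis of I over C and the product h of the leading C-coefficients of the elements of G (with respect to the order on y-monomials) is not in P. Then σ_P(G) is a Gröbner basis of σ_P(I)·k(P)[y]: the leading monomial of every nonzero element of the ideal generated by σ_P(G) is divisible by the leading monomial of some σ_P(g), g ∈ G. -/

import Mathlib

open MvPolynomial

noncomputable section Groebner

variable {σ : Type*} {C : Type*} [CommRing C]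

/-- The leading monomial `inM_*(f)` of `f ∈ C[y]` with respect to the monomial
order `m` (the maximum of the support of `f`; it is `0` when `f = 0`). -/
def lmon (m : MonomialOrder σ) (f : MvPolynomial σ C) : σ →₀ ℕ :=
  m.toSyn.symm (f.support.sup fun d => m.toSyn d)

/-- The leading coefficient `inC_*(f) ∈ C` of `f ∈ C[y]` with respect to `m`. -/
def lcoeff (m : MonomialOrder σ) (f : MvPolynomial σ C) : C :=
  f.coeff (lmon m f)

/-- The residue field `k(P) = Frac(C/P)` at a prime `P ⊆ C`. -/
abbrev resField (P : Ideal C) [P.IsPrime] := FractionRing (C ⧸ P)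

/-- The specialization map `σ_P : C[y] → k(P)[y]`, applying the canonical map
`C → k(P)` to the coefficients. -/
def specialize (P : Ideal C) [P.IsPrime] :
    MvPolynomial σ C →+* MvPolynomial σ (resField P) :=
  MvPolynomial.map ((algebraMap (C ⧸ P) (resField P)).comp (Ideal.Quotient.mk P))

end Groebner

section Aux

namespace GroebnerAux

variable {σ : Type*} {R S : Type*} [CommRing R] [CommRing S]

lemma lmon_mem_support (m : MonomialOrder σ) {f : MvPolynomial σ R} (hf : f ≠ 0) :
    lmon m f ∈ f.support := by
  have h : f.support.Nonempty := MvPolynomial.support_nonempty.mpr hf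
  obtain ⟨d, hd, hsup⟩ := Finset.exists_mem_eq_sup f.support h (fun d => m.toSyn d)
  rw [lmon, hsup, AddEquiv.symm_apply_apply]
  exact hd

lemma lcoeff_ne_zero (m : MonomialOrder σ) {f : MvPolynomial σ R} (hf : f ≠ 0) :
    lcoeff m f ≠ 0 :=
  MvPolynomial.mem_support_iff.mp (lmon_mem_support m hf)

lemma le_lmon (m : MonomialOrder σ) {f : MvPolynomial σ R} {d : σ →₀ ℕ}
    (hd : d ∈ f.support) : m.toSyn d ≤ m.toSyn (lmon m f) := by
  rw [lmon, AddEquiv.apply_symm_apply]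
  exact Finset.le_sup hd

lemma coeff_eq_zero_of_lt (m : MonomialOrder σ) {f : MvPolynomial σ R} {d : σ →₀ ℕ}
    (hd : m.toSyn (lmon m f) < m.toSyn d) : f.coeff d = 0 := by
  by_contra h
  exact absurd (le_lmon m (MvPolynomial.mem_support_iff.mpr h)) (not_le.mpr hd)

lemma lmon_map (m : MonomialOrder σ) (ψ : R →+* S) {f : MvPolynomial σ R}
    (h : ψ (lcoeff m f) ≠ 0) :
    lmon m (MvPolynomial.map ψ f) = lmon m f := by
  have hmem : lmon m f ∈ (MvPolynomial.map ψ f).support := by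
    rw [MvPolynomial.mem_support_iff, MvPolynomial.coeff_map]; exact h
  have h1 : m.toSyn (lmon m f) ≤ m.toSyn (lmon m (MvPolynomial.map ψ f)) := le_lmon m hmem
  have hne : MvPolynomial.map ψ f ≠ 0 := by
    intro h0; rw [h0] at hmem; simp at hmem
  have h2 : m.toSyn (lmon m (MvPolynomial.map ψ f)) ≤ m.toSyn (lmon m f) :=
    le_lmon m (MvPolynomial.support_map_subset _ _ (lmon_mem_support m hne))
  exact m.toSyn.injective (le_antisymm h2 h1)

lemma lmon_C_mul {K : Type*} [Field K] (m : MonomialOrder σ) {u : K} (hu : u ≠ 0)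
    (p : MvPolynomial σ K) : lmon m (MvPolynomial.C u * p) = lmon m p := by
  have hs : (MvPolynomial.C u * p).support = p.support := by
    ext d
    simp [MvPolynomial.mem_support_iff, MvPolynomial.coeff_C_mul, hu]
  rw [lmon, lmon, hs]

lemma monomial_dvd_monomial {a b : σ →₀ ℕ} {c d : R}
    (hdvd : (MvPolynomial.monomial a c : MvPolynomial σ R) ∣ MvPolynomial.monomial b d)
    (hd : d ≠ 0) : ∃ (u : σ →₀ ℕ) (e : R), b = a + u ∧ d = c * e := by
  classical
  obtain ⟨q, hq⟩ := hdvd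
  have hb : b ∈ (MvPolynomial.monomial a c * q).support := by
    rw [← hq]; simpa [MvPolynomial.mem_support_iff] using hd
  have hmem := MvPolynomial.support_mul _ q hb
  rw [Finset.mem_add] at hmem
  obtain ⟨y, hy, z, hz, hyz⟩ := hmem
  have hy' : y = a := by
    have := MvPolynomial.support_monomial_subset hy
    simpa using this
  subst hy'
  refine ⟨z, q.coeff z, hyz.symm, ?_⟩
  have h1 : MvPolynomial.coeff b (MvPolynomial.monomial b d : MvPolynomial σ R) = d := by simp
  rw [hq, ← hyz, MvPolynomial.coeff_monomial_mul] at h1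
  exact h1.symm

lemma lmon_sub_lt (m : MonomialOrder σ) {f q : MvPolynomial σ R}
    (hbound : ∀ d ∈ q.support, m.toSyn d ≤ m.toSyn (lmon m f))
    (hcoeff : q.coeff (lmon m f) = lcoeff m f)
    (hne : f - q ≠ 0) :
    m.toSyn (lmon m (f - q)) < m.toSyn (lmon m f) := by
  have hmem := lmon_mem_support m hne
  have hmem' := MvPolynomial.mem_support_iff.mp hmem
  have hle : m.toSyn (lmon m (f - q)) ≤ m.toSyn (lmon m f) := by
    by_contra h
    push_neg at h
    have h1 : f.coeff (lmon m (f - q)) = 0 := coeff_eq_zero_of_lt m h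
    have h2 : q.coeff (lmon m (f - q)) = 0 := by
      by_contra h2
      exact absurd (hbound _ (MvPolynomial.mem_support_iff.mpr h2)) (not_le.mpr h)
    rw [MvPolynomial.coeff_sub, h1, h2, sub_zero] at hmem'
    exact hmem' rfl
  rcases lt_or_eq_of_le hle with h | h
  · exact h
  · exfalso
    have hd : lmon m (f - q) = lmon m f := m.toSyn.injective h
    rw [MvPolynomial.coeff_sub, hd, hcoeff] at hmem'
    exact hmem' (sub_self _)

end GroebnerAux

end Aux

theorem groebner_basis_specialization {σ : Type*} {C : Type*} [CommRing C]
    (m : MonomialOrder σ) (P : Ideal C) [P.IsPrime]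
    (G : Finset (MvPolynomial σ C))
    (hGB : ∀ f ∈ Ideal.span (G : Set (MvPolynomial σ C)), f ≠ 0 →
      ∃ g ∈ G, (monomial (lmon m g) (lcoeff m g) : MvPolynomial σ C) ∣
        monomial (lmon m f) (lcoeff m f))
    (hh : (∏ g ∈ G, lcoeff m g) ∉ P) :
    ∀ p ∈ Ideal.span ((fun g => specialize P g) '' (G : Set (MvPolynomial σ C))),
      p ≠ 0 → ∃ g ∈ G, lmon m (specialize (σ := σ) P g) ≤ lmon m p := by
  classical
  intro p hp hp0
  set K := resField P with hK
  set φ : C →+* K := (algebraMap (C ⧸ P) (resField P)).comp (Ideal.Quotient.mk P) with hφ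
  have hspec : ∀ f : MvPolynomial σ C, specialize P f = MvPolynomial.map φ f := fun _ => rfl
  have hφ0 : ∀ c : C, φ c = 0 ↔ c ∈ P := by
    intro c
    rw [hφ]
    simp only [RingHom.comp_apply]
    rw [map_eq_zero_iff _ (IsFractionRing.injective (C ⧸ P) K)]
    exact Ideal.Quotient.eq_zero_iff_mem
  have h1P : (1 : C) ∉ P := fun h1 =>
    (‹P.IsPrime›.ne_top) ((Ideal.eq_top_iff_one P).mpr h1)
  -- each leading coefficient is not in P
  have hgP : ∀ g ∈ G, lcoeff m g ∉ P := by
    intro g hg hmem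
    apply hh
    rw [← Finset.mul_prod_erase G _ hg]
    exact Ideal.mul_mem_right _ P hmem
  -- clearing denominators
  have hclear : ∀ r : MvPolynomial σ K, ∃ (c : C) (r' : MvPolynomial σ C), c ∉ P ∧
      MvPolynomial.C (φ c) * r = specialize P r' := by
    intro r
    induction r using MvPolynomial.induction_on with
    | C a =>
      obtain ⟨x, y, hy, hxy⟩ := IsFractionRing.div_surjective (A := C ⧸ P) a
      obtain ⟨n, rfl⟩ := Ideal.Quotient.mk_surjective x
      obtain ⟨c, rfl⟩ := Ideal.Quotient.mk_surjective y
      have hy0 : (Ideal.Quotient.mk P c) ≠ 0 := nonZeroDivisors.ne_zero hy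
      have hcP : c ∉ P := fun h => hy0 (Ideal.Quotient.eq_zero_iff_mem.mpr h)
      refine ⟨c, MvPolynomial.C n, hcP, ?_⟩
      have hy0' : (algebraMap (C ⧸ P) K) (Ideal.Quotient.mk P c) ≠ 0 :=
        (map_ne_zero_iff _ (IsFractionRing.injective (C ⧸ P) K)).mpr hy0
      rw [hspec, MvPolynomial.map_C, ← MvPolynomial.C_mul]
      congr 1
      simp only [hφ, RingHom.comp_apply]
      rw [← hxy, mul_comm, div_mul_cancel₀ _ hy0']
    | add q r ihq ihr =>
      obtain ⟨cq, q', hcq, hq⟩ := ihq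
      obtain ⟨cr, r', hcr, hr⟩ := ihr
      refine ⟨cq * cr, MvPolynomial.C cr * q' + MvPolynomial.C cq * r', ?_, ?_⟩
      · intro h
        rcases ‹P.IsPrime›.mem_or_mem h with h | h
        exacts [hcq h, hcr h]
      · simp only [hspec] at hq hr ⊢
        simp only [map_add, map_mul, MvPolynomial.map_C, MvPolynomial.C_mul]
        rw [← hq, ← hr]
        ring
    | mul_X q n ih =>
      obtain ⟨c, q', hc, hq⟩ := ih
      refine ⟨c, q' * MvPolynomial.X n, hc, ?_⟩
      simp only [hspec] at hq ⊢
      rw [map_mul, MvPolynomial.map_X, ← hq, mul_assoc]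
  -- lifting elements of the specialized ideal
  have hlift : ∀ p' ∈ Ideal.span ((fun g => specialize P g) '' (G : Set (MvPolynomial σ C))),
      ∃ (f : MvPolynomial σ C) (c : C), f ∈ Ideal.span (G : Set (MvPolynomial σ C)) ∧
        c ∉ P ∧ specialize P f = MvPolynomial.C (φ c) * p' := by
    intro p' hp'
    induction hp' using Submodule.span_induction with
    | mem x hx =>
      obtain ⟨g, hg, rfl⟩ := hx
      exact ⟨g, 1, Ideal.subset_span hg, h1P, by simp⟩
    | zero => exact ⟨0, 1, zero_mem _, h1P, by simp⟩
    | add x y hx hy ihx ihy =>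
      obtain ⟨fx, cx, hfx, hcx, hx'⟩ := ihx
      obtain ⟨fy, cy, hfy, hcy, hy'⟩ := ihy
      refine ⟨MvPolynomial.C cy * fx + MvPolynomial.C cx * fy, cx * cy, ?_, ?_, ?_⟩
      · exact Ideal.add_mem _ (Ideal.mul_mem_left _ _ hfx) (Ideal.mul_mem_left _ _ hfy)
      · intro h
        rcases ‹P.IsPrime›.mem_or_mem h with h | h
        exacts [hcx h, hcy h]
      · simp only [hspec] at hx' hy' ⊢
        simp only [map_add, map_mul, MvPolynomial.map_C, MvPolynomial.C_mul]
        rw [hx', hy']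
        ring
    | smul r x hx ih =>
      obtain ⟨f, c, hf, hc, hfx⟩ := ih
      obtain ⟨c', r', hc', hr'⟩ := hclear r
      refine ⟨r' * f, c * c', Ideal.mul_mem_left _ _ hf, ?_, ?_⟩
      · intro h
        rcases ‹P.IsPrime›.mem_or_mem h with h | h
        exacts [hc h, hc' h]
      · simp only [hspec] at hr' hfx ⊢
        simp only [smul_eq_mul, map_mul, MvPolynomial.C_mul]
        rw [← hr', hfx]
        ring
  obtain ⟨f, c, hf, hc, hfc⟩ := hlift p hp
  clear hlift hclear hp
  suffices key : ∀ d : m.syn, ∀ f : MvPolynomial σ C, m.toSyn (lmon m f) = d →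
      f ∈ Ideal.span (G : Set (MvPolynomial σ C)) → ∀ c, c ∉ P →
      specialize P f = MvPolynomial.C (φ c) * p →
      ∃ g ∈ G, lmon m (specialize (σ := σ) P g) ≤ lmon m p by
    exact key _ f rfl hf c hc hfc
  clear hf hc hfc f c
  intro d
  induction d using WellFoundedLT.induction with
  | _ d IH =>
  intro f hfd hfspan c hc hfc
  have hφc : φ c ≠ 0 := fun h => hc ((hφ0 c).mp h)
  have hrhs : MvPolynomial.C (φ c) * p ≠ 0 := by
    apply mul_ne_zero _ hp0
    simpa using hφc
  have hf0 : f ≠ 0 := by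
    rintro rfl
    rw [map_zero] at hfc
    exact hrhs hfc.symm
  obtain ⟨g, hg, hdvd⟩ := hGB f hfspan hf0
  obtain ⟨a, e, hab, hcd⟩ :=
    GroebnerAux.monomial_dvd_monomial hdvd (GroebnerAux.lcoeff_ne_zero m hf0)
  by_cases he : e ∈ P
  · -- leading term of f dies under specialization; cancel and recurse
    set q0 : MvPolynomial σ C := monomial a e * g with hq0
    have hbound : ∀ d' ∈ q0.support, m.toSyn d' ≤ m.toSyn (lmon m f) := by
      intro d' hd'
      rw [hq0] at hd'
      have hmem := MvPolynomial.support_mul _ g hd'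
      rw [Finset.mem_add] at hmem
      obtain ⟨y, hy, z, hz, hyz⟩ := hmem
      have hy' : y = a := by simpa using MvPolynomial.support_monomial_subset hy
      rw [← hyz, hy', hab, map_add, map_add, add_comm (m.toSyn (lmon m g))]
      exact add_le_add le_rfl (GroebnerAux.le_lmon m hz)
    have hcoeffq0 : q0.coeff (lmon m f) = lcoeff m f := by
      rw [hab, add_comm, hq0, MvPolynomial.coeff_monomial_mul, hcd]
      exact mul_comm e _
    have hspecq0 : specialize P q0 = 0 := by
      rw [hq0, map_mul, hspec, MvPolynomial.map_monomial]
      have : φ e = 0 := (hφ0 e).mpr he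
      rw [this, MvPolynomial.monomial_zero, zero_mul]
    have hfq : specialize P (f - q0) = MvPolynomial.C (φ c) * p := by
      rw [map_sub, hspecq0, sub_zero, hfc]
    have hfq0 : f - q0 ≠ 0 := by
      intro h
      rw [h, map_zero] at hfq
      exact hrhs hfq.symm
    have hlt : m.toSyn (lmon m (f - q0)) < d := by
      rw [← hfd]
      exact GroebnerAux.lmon_sub_lt m hbound hcoeffq0 hfq0
    exact IH _ hlt (f - q0) rfl
      (Ideal.sub_mem _ hfspan (Ideal.mul_mem_left _ _ (Ideal.subset_span hg))) c hc hfq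
  · -- leading coefficient of f survives
    have hlcf : lcoeff m f ∉ P := by
      rw [hcd]
      intro h
      rcases ‹P.IsPrime›.mem_or_mem h with h | h
      exacts [hgP g hg h, he h]
    have h1 : lmon m (specialize (σ := σ) P f) = lmon m f := by
      rw [hspec]
      exact GroebnerAux.lmon_map m φ (fun h => hlcf ((hφ0 _).mp h))
    have h2 : lmon m (specialize (σ := σ) P g) = lmon m g := by
      rw [hspec]
      exact GroebnerAux.lmon_map m φ (fun h => hgP g hg ((hφ0 _).mp h))
    have h3 : lmon m (specialize (σ := σ) P f) = lmon m p := by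
      rw [hfc, GroebnerAux.lmon_C_mul m hφc]
    refine ⟨g, hg, ?_⟩
    rw [h2, ← h3, h1, hab]
    exact self_le_add_right _ _
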